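/- arXiv:2209.03722 — 3 statements merged into one kernel-verified Lean document; each statement's English description precedes it below -/
import Mathlib

section
/- Let ε ∈ (0,1). For every δ > 0 there exists n₀ such that for all n ≥ n₀, every integer d ≥ 1, and every d-regular finite simple graph G on n vertices, with p = (1−ε)/d, the probability that every connected component of the percolated graph G_p has order at most 9·(log n)/ε² is at least 1 − δ (log denotes the natural logarithm). -/
open Finset

variable {V : Type*}

/-- The number of neighbours of `v` in `G`. -/
noncomputable def degAt (G : SimpleGraph V) (v : V) : ℕ := {w | G.Adj v w}.ncard

/-- `G` is `d`-regular. -/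
def IsRegOfDeg (G : SimpleGraph V) (d : ℕ) : Prop := ∀ v, degAt G v = d

/-- The order (number of vertices) of the connected component of `v` in `H`. -/
noncomputable def compCard (H : SimpleGraph V) (v : V) : ℕ := {w | H.Reachable v w}.ncard

/-- The order of the largest connected component of `H`. -/
noncomputable def maxCompCard [Fintype V] (H : SimpleGraph V) : ℕ :=
  Finset.univ.sup (compCard H)

/-- The edge set of `G` as a `Finset`. -/
noncomputable def edgeFins (G : SimpleGraph V) [Fintype V] : Finset (Sym2 V) :=
  G.edgeSet.toFinite.toFinset

open Classical in
/-- The probability of the event `A` under bond percolation on `G` with retention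
probability `p`: each edge of `G` is retained independently with probability `p`. -/
noncomputable def percProb [Fintype V] (G : SimpleGraph V) (p : ℝ)
    (A : SimpleGraph V → Prop) : ℝ :=
  ∑ F ∈ (edgeFins G).powerset,
    if A (SimpleGraph.fromEdgeSet (↑F)) then
      p ^ F.card * (1 - p) ^ ((edgeFins G).card - F.card) else 0

open Classical in
/-- Percolation expectation of an ℝ-valued observable. -/
noncomputable def percExp [Fintype V] (G : SimpleGraph V) (p : ℝ)
    (X : SimpleGraph V → ℝ) : ℝ :=
  ∑ F ∈ (edgeFins G).powerset,
    p ^ F.card * (1 - p) ^ ((edgeFins G).card - F.card) *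
      X (SimpleGraph.fromEdgeSet (↑F))

open Classical in
/-- The probability of the event `A` under three independent bond percolations on `G`
with retention probabilities `p₁, p₂, p₃`. -/
noncomputable def percProb3 [Fintype V] (G : SimpleGraph V) (p₁ p₂ p₃ : ℝ)
    (A : SimpleGraph V → SimpleGraph V → SimpleGraph V → Prop) : ℝ :=
  ∑ F₁ ∈ (edgeFins G).powerset, ∑ F₂ ∈ (edgeFins G).powerset, ∑ F₃ ∈ (edgeFins G).powerset,
    if A (SimpleGraph.fromEdgeSet (↑F₁)) (SimpleGraph.fromEdgeSet (↑F₂))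
        (SimpleGraph.fromEdgeSet (↑F₃)) then
      (p₁ ^ F₁.card * (1 - p₁) ^ ((edgeFins G).card - F₁.card)) *
      (p₂ ^ F₂.card * (1 - p₂) ^ ((edgeFins G).card - F₂.card)) *
      (p₃ ^ F₃.card * (1 - p₃) ^ ((edgeFins G).card - F₃.card))
    else 0

/-- The Cartesian product of the graphs `Gs i`, `i : Fin t`. -/
def prodGraph {t : ℕ} {V : Fin t → Type*} (Gs : ∀ i, SimpleGraph (V i)) :
    SimpleGraph (∀ i, V i) where
  Adj u v := ∃ i, (Gs i).Adj (u i) (v i) ∧ ∀ j, j ≠ i → u j = v j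
  symm := by
    constructor
    rintro u v ⟨i, hadj, h⟩
    exact ⟨i, hadj.symm, fun j hj => (h j hj).symm⟩
  loopless := by
    constructor
    rintro u ⟨i, hadj, -⟩
    exact (Gs i).irrefl hadj

variable {V : Type*}

/-- binomial upper tail: probability that Bin(b,p) ≥ m. -/
noncomputable def binT (p : ℝ) : ℕ → ℕ → ℝ
  | _, 0 => 1
  | 0, _+1 => 0
  | b+1, m+1 => p * binT p b m + (1-p) * binT p b (m+1)

variable {p : ℝ}

lemma binT_zero (p : ℝ) (b : ℕ) : binT p b 0 = 1 := by cases b <;> rfl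

lemma binT_succ (p : ℝ) (b m : ℕ) :
    binT p (b+1) (m+1) = p * binT p b m + (1-p) * binT p b (m+1) := rfl

lemma binT_nonneg (hp0 : 0 ≤ p) (hp1 : p ≤ 1) : ∀ b m, 0 ≤ binT p b m := by
  intro b
  induction b with
  | zero => intro m; cases m with
    | zero => simp [binT_zero]
    | succ m => simp [binT]
  | succ b ih =>
    intro m; cases m with
    | zero => simp [binT_zero]
    | succ m =>
      rw [binT_succ]
      have := ih m; have := ih (m+1)
      nlinarith

lemma binT_le_one (hp0 : 0 ≤ p) (hp1 : p ≤ 1) : ∀ b m, binT p b m ≤ 1 := by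
  intro b
  induction b with
  | zero => intro m; cases m with
    | zero => simp [binT_zero]
    | succ m => simp [binT]
  | succ b ih =>
    intro m; cases m with
    | zero => simp [binT_zero]
    | succ m =>
      rw [binT_succ]
      have := ih m; have := ih (m+1)
      have := binT_nonneg hp0 hp1 b m
      have := binT_nonneg hp0 hp1 b (m+1)
      nlinarith

lemma binT_anti_m (hp0 : 0 ≤ p) (hp1 : p ≤ 1) : ∀ b m, binT p b (m+1) ≤ binT p b m := by
  intro b
  induction b with
  | zero => intro m; cases m with
    | zero => simp [binT_zero, binT]
    | succ m => simp [binT]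
  | succ b ih =>
    intro m; cases m with
    | zero =>
      rw [binT_zero, binT_succ]
      have := binT_le_one hp0 hp1 b 0
      have := binT_le_one hp0 hp1 b 1
      nlinarith
    | succ m =>
      rw [binT_succ, binT_succ]
      have h1 := ih m
      have h2 := ih (m+1)
      nlinarith

lemma binT_mono_b (hp0 : 0 ≤ p) (hp1 : p ≤ 1) (b m : ℕ) : binT p b m ≤ binT p (b+1) m := by
  cases m with
  | zero => simp [binT_zero]
  | succ m =>
    rw [binT_succ]
    have := binT_anti_m hp0 hp1 b m
    nlinarith

lemma binT_le_exp (hp0 : 0 ≤ p) (hp1 : p ≤ 1) {y : ℝ} (hy : 1 ≤ y) :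
    ∀ b m, binT p b m ≤ (1/y)^m * (1-p+p*y)^b := by
  have hy0 : 0 < y := lt_of_lt_of_le one_pos hy
  have hX1 : 1 ≤ 1 - p + p * y := by nlinarith
  intro b
  induction b with
  | zero => intro m; cases m with
    | zero => simpa [binT_zero] using le_refl (1:ℝ)
    | succ m =>
      have h0 : (0:ℝ) ≤ (1/y)^(m+1) := by positivity
      simpa [binT] using h0
  | succ b ih =>
    intro m; cases m with
    | zero =>
      rw [binT_zero]
      have : (1:ℝ) ≤ (1-p+p*y)^(b+1) := one_le_pow₀ hX1
      simpa using this
    | succ m =>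
      rw [binT_succ]
      have h1 := ih m
      have h2 := ih (m+1)
      have key : p * ((1/y)^m * (1-p+p*y)^b) + (1-p) * ((1/y)^(m+1) * (1-p+p*y)^b)
          = (1/y)^(m+1) * (1-p+p*y)^(b+1) := by
        have hyne : y ≠ 0 := ne_of_gt hy0
        field_simp
        linear_combination (-(p * y⁻¹ ^ m * (1 - p + p * y) ^ b)) * mul_inv_cancel₀ hyne
      have hXb : (0:ℝ) ≤ (1-p+p*y)^b := by positivity
      calc p * binT p b m + (1-p) * binT p b (m+1)
          ≤ p * ((1/y)^m * (1-p+p*y)^b) + (1-p) * ((1/y)^(m+1) * (1-p+p*y)^b) := by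
            have hb1 : 0 ≤ 1 - p := by linarith
            gcongr
        _ = _ := key

variable {V : Type*}

open Classical in
noncomputable def prOf (E' : Finset (Sym2 V)) (p : ℝ) (A : Finset (Sym2 V) → Prop) : ℝ :=
  ∑ F ∈ E'.powerset,
    if A F then p ^ F.card * (1 - p) ^ (E'.card - F.card) else 0

variable {p : ℝ}

open Classical in
lemma prOf_def (E' : Finset (Sym2 V)) (p : ℝ) (A : Finset (Sym2 V) → Prop) :
    prOf E' p A = ∑ F ∈ E'.powerset,
      if A F then p ^ F.card * (1 - p) ^ (E'.card - F.card) else 0 := rfl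

lemma prOf_nonneg (hp0 : 0 ≤ p) (hp1 : p ≤ 1) (E' : Finset (Sym2 V))
    (A : Finset (Sym2 V) → Prop) : 0 ≤ prOf E' p A := by
  classical
  rw [prOf_def]
  refine Finset.sum_nonneg fun F _ => ?_
  split
  · have : (0:ℝ) ≤ 1 - p := by linarith
    positivity
  · exact le_refl 0

lemma prOf_mono (hp0 : 0 ≤ p) (hp1 : p ≤ 1) (E' : Finset (Sym2 V))
    {A B : Finset (Sym2 V) → Prop} (h : ∀ F, F ∈ E'.powerset → A F → B F) :
    prOf E' p A ≤ prOf E' p B := by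
  classical
  rw [prOf_def, prOf_def]
  refine Finset.sum_le_sum fun F hF => ?_
  have hw : (0:ℝ) ≤ p ^ F.card * (1 - p) ^ (E'.card - F.card) := by
    have : (0:ℝ) ≤ 1 - p := by linarith
    positivity
  by_cases hA : A F
  · rw [if_pos hA, if_pos (h F hF hA)]
  · rw [if_neg hA]
    split
    · exact hw
    · exact le_refl 0

lemma sum_weights (E' : Finset (Sym2 V)) (p : ℝ) :
    ∑ F ∈ E'.powerset, p ^ F.card * (1 - p) ^ (E'.card - F.card) = 1 := by
  classical
  induction E' using Finset.induction with
  | empty => simp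
  | @insert a s ha ih =>
    rw [Finset.sum_powerset_insert ha]
    have hcard : (insert a s).card = s.card + 1 := Finset.card_insert_of_notMem ha
    have h1 : ∀ F ∈ s.powerset,
        p ^ F.card * (1 - p) ^ ((insert a s).card - F.card)
        = (1-p) * (p ^ F.card * (1 - p) ^ (s.card - F.card)) := by
      intro F hF
      have hFs : F.card ≤ s.card := Finset.card_le_card (Finset.mem_powerset.1 hF)
      rw [hcard]
      rw [show s.card + 1 - F.card = (s.card - F.card) + 1 by omega, pow_succ]
      ring
    have h2 : ∀ F ∈ s.powerset,
        p ^ (insert a F).card * (1 - p) ^ ((insert a s).card - (insert a F).card)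
        = p * (p ^ F.card * (1 - p) ^ (s.card - F.card)) := by
      intro F hF
      have haF : a ∉ F := fun h => ha (Finset.mem_powerset.1 hF h)
      rw [Finset.card_insert_of_notMem haF, hcard]
      rw [show s.card + 1 - (F.card + 1) = s.card - F.card by omega, pow_succ]
      ring
    rw [Finset.sum_congr rfl h1, Finset.sum_congr rfl h2, ← Finset.mul_sum, ← Finset.mul_sum, ih]
    ring

lemma prOf_true (E' : Finset (Sym2 V)) (p : ℝ) :
    prOf E' p (fun _ => True) = 1 := by
  classical
  rw [prOf_def]
  simpa using sum_weights E' p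

lemma prOf_le_one (hp0 : 0 ≤ p) (hp1 : p ≤ 1) (E' : Finset (Sym2 V))
    (A : Finset (Sym2 V) → Prop) : prOf E' p A ≤ 1 := by
  have := prOf_mono hp0 hp1 E' (A := A) (B := fun _ => True) (fun F _ _ => trivial)
  simpa [prOf_true] using this

lemma prOf_add_compl (E' : Finset (Sym2 V)) (p : ℝ) (A : Finset (Sym2 V) → Prop) :
    prOf E' p A + prOf E' p (fun F => ¬ A F) = 1 := by
  classical
  rw [prOf_def, prOf_def, ← Finset.sum_add_distrib]
  refine Eq.trans (Finset.sum_congr rfl fun F hF => ?_) (sum_weights E' p)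
  by_cases hA : A F <;> simp [hA]

/-- conditioning on the state of one edge. -/
lemma prOf_split [DecidableEq V] {E' : Finset (Sym2 V)} {e : Sym2 V} (he : e ∈ E') (p : ℝ)
    (A : Finset (Sym2 V) → Prop) :
    prOf E' p A = p * prOf (E'.erase e) p (fun F => A (insert e F))
      + (1-p) * prOf (E'.erase e) p A := by
  classical
  have hins : E' = insert e (E'.erase e) := (Finset.insert_erase he).symm
  have hnotm : e ∉ E'.erase e := Finset.notMem_erase e E'
  have hpos : 0 < E'.card := Finset.card_pos.2 ⟨e, he⟩
  have hcard : E'.card = (E'.erase e).card + 1 := by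
    rw [Finset.card_erase_of_mem he]; omega
  rw [prOf_def]
  rw [show E'.powerset = (insert e (E'.erase e)).powerset by rw [← hins]]
  rw [Finset.sum_powerset_insert hnotm, add_comm
    (p * prOf (E'.erase e) p fun F => A (insert e F)) ((1-p) * prOf (E'.erase e) p A)]
  congr 1
  · rw [prOf_def, Finset.mul_sum]
    refine Finset.sum_congr rfl fun F hF => ?_
    have hFs : F.card ≤ (E'.erase e).card := Finset.card_le_card (Finset.mem_powerset.1 hF)
    by_cases hA : A F
    · simp only [hA, if_true]
      rw [hcard,
        show (E'.erase e).card + 1 - F.card = ((E'.erase e).card - F.card) + 1 by omega,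
        pow_succ]
      ring
    · simp only [hA, if_false, mul_zero]
  · rw [prOf_def, Finset.mul_sum]
    refine Finset.sum_congr rfl fun F hF => ?_
    have haF : e ∉ F := fun h => hnotm (Finset.mem_powerset.1 hF h)
    have hFs : F.card ≤ (E'.erase e).card := Finset.card_le_card (Finset.mem_powerset.1 hF)
    by_cases hA : A (insert e F)
    · simp only [hA, if_true]
      rw [Finset.card_insert_of_notMem haF, hcard,
        show (E'.erase e).card + 1 - (F.card + 1) = (E'.erase e).card - F.card by omega]
      ring
    · simp only [hA, if_false, mul_zero]

lemma prOf_false_of (hp0 : 0 ≤ p) (hp1 : p ≤ 1) (E' : Finset (Sym2 V))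
    {A : Finset (Sym2 V) → Prop} (h : ∀ F ∈ E'.powerset, ¬ A F) :
    prOf E' p A = 0 := by
  classical
  rw [prOf_def]
  refine Finset.sum_eq_zero fun F hF => ?_
  rw [if_neg (h F hF)]

/-- union bound over a finite index set -/
lemma prOf_union_bound (hp0 : 0 ≤ p) (hp1 : p ≤ 1) (E' : Finset (Sym2 V))
    {ι : Type*} (s : Finset ι) (B : ι → Finset (Sym2 V) → Prop) :
    prOf E' p (fun F => ∃ i ∈ s, B i F) ≤ ∑ i ∈ s, prOf E' p (B i) := by
  classical
  simp only [prOf_def]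
  rw [Finset.sum_comm]
  refine Finset.sum_le_sum fun F hF => ?_
  have hw : (0:ℝ) ≤ p ^ F.card * (1 - p) ^ (E'.card - F.card) := by
    have : (0:ℝ) ≤ 1 - p := by linarith
    positivity
  by_cases hA : ∃ i ∈ s, B i F
  · obtain ⟨i, hi, hBi⟩ := hA
    rw [if_pos ⟨i, hi, hBi⟩]
    calc p ^ F.card * (1 - p) ^ (E'.card - F.card)
        = (if B i F then p ^ F.card * (1 - p) ^ (E'.card - F.card) else 0) := by rw [if_pos hBi]
      _ ≤ ∑ j ∈ s, (if B j F then p ^ F.card * (1 - p) ^ (E'.card - F.card) else 0) := by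
          refine Finset.single_le_sum (f := fun j => if B j F then p ^ F.card * (1 - p) ^ (E'.card - F.card) else 0) (fun j _ => ?_) hi
          beta_reduce
          split
          · exact hw
          · exact le_refl 0
  · rw [if_neg hA]
    refine Finset.sum_nonneg fun j _ => ?_
    split
    · exact hw
    · exact le_refl 0

variable {V : Type*}

/-- degree of `u` counted in an edge finset -/
noncomputable def degE [DecidableEq V] (E' : Finset (Sym2 V)) (u : V) : ℕ :=
  (E'.filter (fun e => u ∈ e)).card

/-- set of vertices reachable from `W` in the percolation graph `fromEdgeSet F` -/
def reachSet (F : Finset (Sym2 V)) (W : Finset V) : Set V :=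
  {y | ∃ u ∈ W, (SimpleGraph.fromEdgeSet (↑F : Set (Sym2 V))).Reachable u y}

lemma degE_erase_le [DecidableEq V] (E' : Finset (Sym2 V)) (e : Sym2 V) (u : V) :
    degE (E'.erase e) u ≤ degE E' u := by
  classical
  exact Finset.card_le_card (Finset.filter_subset_filter _ (Finset.erase_subset e E'))

lemma degE_erase_mem [DecidableEq V] {E' : Finset (Sym2 V)} {e : Sym2 V} (he : e ∈ E')
    {u : V} (hu : u ∈ e) : degE (E'.erase e) u = degE E' u - 1 := by
  classical
  unfold degE
  rw [Finset.filter_erase, Finset.card_erase_of_mem (Finset.mem_filter.2 ⟨he, hu⟩)]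

lemma degE_pos [DecidableEq V] {E' : Finset (Sym2 V)} {e : Sym2 V} (he : e ∈ E')
    {u : V} (hu : u ∈ e) : 1 ≤ degE E' u := by
  classical
  exact Finset.card_pos.2 ⟨e, Finset.mem_filter.2 ⟨he, hu⟩⟩

lemma adj_fromEdgeSet_finset {F : Finset (Sym2 V)} {a b : V} :
    (SimpleGraph.fromEdgeSet (↑F : Set (Sym2 V))).Adj a b ↔ s(a,b) ∈ F ∧ a ≠ b := by
  rw [SimpleGraph.fromEdgeSet_adj]
  simp

/-- Decomposition of reachability upon adding one edge `s(u,x)`. -/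
lemma reach_insert_decomp [DecidableEq V] {F : Finset (Sym2 V)} {u x : V}
    {a b : V}
    (h : (SimpleGraph.fromEdgeSet (↑(insert s(u,x) F) : Set (Sym2 V))).Reachable a b) :
    (SimpleGraph.fromEdgeSet (↑F : Set (Sym2 V))).Reachable a b
    ∨ ((SimpleGraph.fromEdgeSet (↑F : Set (Sym2 V))).Reachable a u
        ∧ (SimpleGraph.fromEdgeSet (↑F : Set (Sym2 V))).Reachable x b)
    ∨ ((SimpleGraph.fromEdgeSet (↑F : Set (Sym2 V))).Reachable a x
        ∧ (SimpleGraph.fromEdgeSet (↑F : Set (Sym2 V))).Reachable u b) := by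
  classical
  set G0 := SimpleGraph.fromEdgeSet (↑F : Set (Sym2 V)) with hG0
  obtain ⟨w⟩ := h
  induction w with
  | nil => exact Or.inl (SimpleGraph.Reachable.refl _)
  | @cons a c b hadj w ih =>
    have hadj' : (s(a,c) = s(u,x) ∧ a ≠ c) ∨ G0.Adj a c := by
      rw [SimpleGraph.fromEdgeSet_adj] at hadj
      obtain ⟨hm, hne⟩ := hadj
      rw [Finset.coe_insert, Set.mem_insert_iff] at hm
      rcases hm with hm | hm
      · exact Or.inl ⟨hm, hne⟩
      · exact Or.inr (adj_fromEdgeSet_finset.2 ⟨hm, hne⟩)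
    rcases hadj' with ⟨heq, hne⟩ | hadj0
    · rcases Sym2.eq_iff.1 heq with ⟨hau, hcx⟩ | ⟨hax, hcu⟩
      · subst hau; subst hcx
        -- a = u, c = x
        rcases ih with h1 | ⟨h1, h2⟩ | ⟨h1, h2⟩
        · exact Or.inr (Or.inl ⟨SimpleGraph.Reachable.refl _, h1⟩)
        · -- Reachable x u, Reachable x b
          exact Or.inl ((h1.symm).trans h2)
        · -- Reachable x x, Reachable u b
          exact Or.inl h2
      · subst hax; subst hcu
        -- a = x, c = u
        rcases ih with h1 | ⟨h1, h2⟩ | ⟨h1, h2⟩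
        · exact Or.inr (Or.inr ⟨SimpleGraph.Reachable.refl _, h1⟩)
        · -- Reachable u u, Reachable x b
          exact Or.inl h2
        · -- Reachable u x, Reachable u b
          exact Or.inl (h1.symm.trans h2)
    · rcases ih with h1 | ⟨h1, h2⟩ | ⟨h1, h2⟩
      · exact Or.inl (hadj0.reachable.trans h1)
      · exact Or.inr (Or.inl ⟨hadj0.reachable.trans h1, h2⟩)
      · exact Or.inr (Or.inr ⟨hadj0.reachable.trans h1, h2⟩)

lemma reach_mono_insert [DecidableEq V] {F : Finset (Sym2 V)} {e : Sym2 V} {a b : V}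
    (h : (SimpleGraph.fromEdgeSet (↑F : Set (Sym2 V))).Reachable a b) :
    (SimpleGraph.fromEdgeSet (↑(insert e F) : Set (Sym2 V))).Reachable a b := by
  refine h.mono (SimpleGraph.fromEdgeSet_mono ?_)
  rw [Finset.coe_insert]
  exact Set.subset_insert _ _

/-- Key set identity: revealing an open edge `s(u,x)` with `u` active. -/
lemma reach_open_eq [DecidableEq V] {F : Finset (Sym2 V)} {u x : V} (hux : u ≠ x)
    {D W : Finset V} (hWD : W ⊆ D) (huW : u ∈ W) :
    (↑D : Set V) ∪ reachSet (insert s(u,x) F) W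
      = (↑(insert x D) : Set V) ∪ reachSet F (insert x W) := by
  classical
  have hadjux : (SimpleGraph.fromEdgeSet (↑(insert s(u,x) F) : Set (Sym2 V))).Adj u x := by
    rw [SimpleGraph.fromEdgeSet_adj]
    exact ⟨Finset.mem_coe.2 (Finset.mem_insert_self _ _), hux⟩
  ext y
  simp only [Set.mem_union, reachSet, Set.mem_setOf_eq, Finset.mem_coe,
    Finset.mem_insert]
  constructor
  · rintro (hD | ⟨w, hw, hr⟩)
    · exact Or.inl (Or.inr hD)
    · rcases reach_insert_decomp hr with h1 | ⟨h1, h2⟩ | ⟨h1, h2⟩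
      · exact Or.inr ⟨w, Or.inr hw, h1⟩
      · exact Or.inr ⟨x, Or.inl rfl, h2⟩
      · exact Or.inr ⟨u, Or.inr huW, h2⟩
  · rintro (hD | ⟨w, hw, hr⟩)
    · rcases hD with rfl | hD
      · exact Or.inr ⟨u, huW, hadjux.reachable⟩
      · exact Or.inl hD
    · rcases hw with rfl | hw
      · exact Or.inr ⟨u, huW, hadjux.reachable.trans (reach_mono_insert hr)⟩
      · exact Or.inr ⟨w, hw, reach_mono_insert hr⟩

/-- If no edge of `F` touches `W`, then nothing new is reachable. -/
lemma reachSet_no_edge {F : Finset (Sym2 V)} {W : Finset V}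
    (h : ∀ e ∈ F, ∀ u ∈ W, u ∉ e) : reachSet F W = ↑W := by
  ext y
  simp only [reachSet, Set.mem_setOf_eq, Finset.mem_coe]
  constructor
  · rintro ⟨w, hw, hr⟩
    obtain ⟨walk⟩ := hr
    cases walk with
    | nil => exact hw
    | cons hadj w' =>
      rw [SimpleGraph.fromEdgeSet_adj] at hadj
      exact absurd (Sym2.mem_mk_left _ _) (h _ hadj.1 w hw)
  · intro hy
    exact ⟨y, hy, SimpleGraph.Reachable.refl _⟩

section core
variable {V : Type*} [DecidableEq V] {p : ℝ}

open Classical in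
lemma prOf_congr (E' : Finset (Sym2 V)) {A B : Finset (Sym2 V) → Prop}
    (h : ∀ F ∈ E'.powerset, (A F ↔ B F)) : prOf E' p A = prOf E' p B := by
  rw [prOf_def, prOf_def]
  exact Finset.sum_congr rfl fun F hF => if_congr (h F hF) rfl rfl

lemma core (hp0 : 0 ≤ p) (hp1 : p ≤ 1) (d k : ℕ) (E' : Finset (Sym2 V)) :
    ∀ (D W : Finset V) (b : ℕ),
      W ⊆ D →
      (∀ e ∈ E', ¬ e.IsDiag) →
      (∀ y, degE E' y ≤ d) →
      (∀ y ∈ D, y ∉ W → degE E' y = 0) →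
      (∑ w ∈ W, degE E' w) + (k - D.card) * d ≤ b →
      prOf E' p (fun F => k ≤ ((↑D : Set V) ∪ reachSet F W).ncard)
        ≤ binT p b (k - D.card) := by
  induction E' using Finset.strongInduction with
  | _ E' ih =>
  intro D W b hWD hdiag hmax hfin hbud
  by_cases hk : k ≤ D.card
  · rw [show k - D.card = 0 by omega, binT_zero]
    exact prOf_le_one hp0 hp1 _ _
  push_neg at hk
  by_cases hE : ∃ e ∈ E', ∃ u ∈ W, u ∈ e
  case neg =>
    have hzero : prOf E' p (fun F => k ≤ ((↑D : Set V) ∪ reachSet F W).ncard) = 0 := by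
      refine prOf_false_of hp0 hp1 E' fun F hF hA => ?_
      have hFE : F ⊆ E' := Finset.mem_powerset.1 hF
      have hno : ∀ e ∈ F, ∀ u ∈ W, u ∉ e := fun e he => by
        push_neg at hE
        exact hE e (hFE he)
      rw [reachSet_no_edge hno, Set.union_eq_self_of_subset_right
        (by exact_mod_cast Finset.coe_subset.2 hWD), Set.ncard_coe_finset] at hA
      omega
    rw [hzero]
    exact binT_nonneg hp0 hp1 _ _
  case pos =>
  obtain ⟨e, heE, u, huW, hue⟩ := hE
  obtain ⟨x, rfl⟩ : ∃ x, e = s(u, x) := Sym2.mem_iff_exists.1 hue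
  have hux : u ≠ x := by
    intro h
    exact hdiag _ heE (by rw [← h]; exact Sym2.mk_isDiag_iff.2 rfl)
  have humem : u ∈ s(u, x) := Sym2.mem_mk_left u x
  have hxmem : x ∈ s(u, x) := Sym2.mem_mk_right u x
  -- b ≥ 1
  have hdegu : 1 ≤ degE E' u := degE_pos heE humem
  have hsumW : degE E' u ≤ ∑ w ∈ W, degE E' w :=
    Finset.single_le_sum (fun w _ => Nat.zero_le _) huW
  obtain ⟨b', rfl⟩ : ∃ b', b = b' + 1 := ⟨b - 1, by omega⟩
  -- the sum over W drops by at least one after erasing e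
  have hsum : (∑ w ∈ W, degE (E'.erase s(u,x)) w) + 1 ≤ ∑ w ∈ W, degE E' w := by
    rw [← Finset.sum_erase_add W _ huW, ← Finset.sum_erase_add W (degE E') huW]
    have h1 : ∑ w ∈ W.erase u, degE (E'.erase s(u,x)) w ≤ ∑ w ∈ W.erase u, degE E' w :=
      Finset.sum_le_sum fun w _ => degE_erase_le E' _ w
    have h2 : degE (E'.erase s(u,x)) u = degE E' u - 1 := degE_erase_mem heE humem
    omega
  -- common hypotheses for the IH on E'.erase e
  have hss : E'.erase s(u,x) ⊂ E' := Finset.erase_ssubset heE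
  have hdiag' : ∀ e ∈ E'.erase s(u,x), ¬ e.IsDiag := fun e he =>
    hdiag e (Finset.mem_of_mem_erase he)
  have hmax' : ∀ y, degE (E'.erase s(u,x)) y ≤ d := fun y =>
    le_trans (degE_erase_le E' _ y) (hmax y)
  -- closed-branch bound
  have hclosed : prOf (E'.erase s(u,x)) p
      (fun F => k ≤ ((↑D : Set V) ∪ reachSet F W).ncard) ≤ binT p b' (k - D.card) := by
    refine ih _ hss D W b' hWD hdiag' hmax' (fun y hy hyW => ?_) ?_
    · have := hfin y hy hyW
      have := degE_erase_le E' s(u,x) y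
      omega
    · omega
  rw [prOf_split heE]
  -- rewrite the open branch using the reachability identity
  have hopen_eq : prOf (E'.erase s(u,x)) p
        (fun F => k ≤ ((↑D : Set V) ∪ reachSet (insert s(u,x) F) W).ncard)
      = prOf (E'.erase s(u,x)) p
        (fun F => k ≤ ((↑(insert x D) : Set V) ∪ reachSet F (insert x W)).ncard) := by
    refine prOf_congr _ fun F hF => ?_
    rw [reach_open_eq hux hWD huW]
  rw [hopen_eq]
  by_cases hxW : x ∈ W
  · -- x already active: both branches are the closed-branch event
    have hxD : x ∈ D := hWD hxW
    have heq : prOf (E'.erase s(u,x)) p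
        (fun F => k ≤ ((↑(insert x D) : Set V) ∪ reachSet F (insert x W)).ncard)
        = prOf (E'.erase s(u,x)) p
        (fun F => k ≤ ((↑D : Set V) ∪ reachSet F W).ncard) := by
      rw [Finset.insert_eq_self.2 hxD, Finset.insert_eq_self.2 hxW]
    rw [heq]
    have hT := binT_mono_b hp0 hp1 b' (k - D.card)
    nlinarith [hclosed, binT_nonneg hp0 hp1 b' (k - D.card)]
  · -- x is newly discovered
    have hxD : x ∉ D := by
      intro hxD
      have h0 := hfin x hxD hxW
      have h1 := degE_pos heE hxmem
      omega
    have hcardD : (insert x D).card = D.card + 1 := Finset.card_insert_of_notMem hxD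
    have hdegx : degE (E'.erase s(u,x)) x = degE E' x - 1 := degE_erase_mem heE hxmem
    have hopen : prOf (E'.erase s(u,x)) p
        (fun F => k ≤ ((↑(insert x D) : Set V) ∪ reachSet F (insert x W)).ncard)
        ≤ binT p b' (k - (D.card + 1)) := by
      have := ih _ hss (insert x D) (insert x W) b'
        (Finset.insert_subset_insert x hWD) hdiag' hmax'
        (fun y hy hyW => ?_) ?_
      · rw [hcardD] at this
        exact this
      · -- finished vertices still have no remaining edges
        have hyD : y ∈ D := by
          rcases Finset.mem_insert.1 hy with rfl | h
          · exact absurd (Finset.mem_insert_self y W) hyW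
          · exact h
        have hyW' : y ∉ W := fun h => hyW (Finset.mem_insert_of_mem h)
        have := hfin y hyD hyW'
        have := degE_erase_le E' s(u,x) y
        omega
      · -- budget
        rw [Finset.sum_insert hxW, hcardD]
        have hdx : degE E' x ≤ d := hmax x
        have hmul : (k - (D.card + 1)) * d + d = (k - D.card) * d := by
          have : k - D.card = (k - (D.card + 1)) + 1 := by omega
          rw [this, Nat.succ_mul]
        omega
    -- combine with the binomial recursion
    obtain ⟨m', hm'⟩ : ∃ m', k - D.card = m' + 1 := ⟨k - D.card - 1, by omega⟩
    rw [hm', binT_succ]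
    have hopen' : prOf (E'.erase s(u,x)) p
        (fun F => k ≤ ((↑(insert x D) : Set V) ∪ reachSet F (insert x W)).ncard)
        ≤ binT p b' m' := by
      rw [show m' = k - (D.card + 1) by omega]
      exact hopen
    have hclosed' : prOf (E'.erase s(u,x)) p
        (fun F => k ≤ ((↑D : Set V) ∪ reachSet F W).ncard) ≤ binT p b' (m' + 1) := by
      rw [← hm']
      exact hclosed
    have h1 := prOf_nonneg hp0 hp1 (E'.erase s(u,x))
      (fun F => k ≤ ((↑(insert x D) : Set V) ∪ reachSet F (insert x W)).ncard)
    have h2 := prOf_nonneg hp0 hp1 (E'.erase s(u,x))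
      (fun F => k ≤ ((↑D : Set V) ∪ reachSet F W).ncard)
    nlinarith [hopen', hclosed']
end core

section numeric

lemma log_quad_bound {ε : ℝ} (hε0 : 0 < ε) (hε1 : ε < 1) :
    ε + ε^2/4 ≤ -Real.log (1-ε) := by
  have h1 : 0 < 1 - ε := by linarith
  set s := Real.sqrt (1-ε) with hs
  have hs0 : 0 < s := Real.sqrt_pos.2 h1
  have hs1 : s ≤ 1 := Real.sqrt_le_one.2 (by linarith)
  have hs2 : s^2 = 1 - ε := Real.sq_sqrt (le_of_lt h1)
  have hlog : Real.log s = Real.log (1-ε) / 2 := Real.log_sqrt (le_of_lt h1)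
  have hls : Real.log s ≤ s - 1 := Real.log_le_sub_one_of_pos hs0
  have hkey : 0 ≤ (1-s)^3 * (3+s) := by
    have h2 : 0 ≤ 1 - s := by linarith
    have h3 : (0:ℝ) ≤ 3 + s := by linarith
    positivity
  nlinarith [hkey, hs2, hlog, hls]

lemma pow_one_add_le_exp {ε : ℝ} (hε0 : 0 ≤ ε) (d k : ℕ) (hd : 1 ≤ d) :
    (1 + ε/d)^(d*k) ≤ Real.exp (ε * k) := by
  have hd0 : (0:ℝ) < d := by exact_mod_cast hd
  have h1 : 1 + ε/d ≤ Real.exp (ε/d) := by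
    have := Real.add_one_le_exp (ε/d)
    linarith
  have h0 : (0:ℝ) ≤ 1 + ε/d := by positivity
  calc (1 + ε/d)^(d*k) ≤ (Real.exp (ε/d))^(d*k) := pow_le_pow_left₀ h0 h1 _
    _ = Real.exp (((d*k : ℕ) : ℝ) * (ε/d)) := (Real.exp_nat_mul _ _).symm
    _ = Real.exp (ε * k) := by
        congr 1
        push_cast
        field_simp

lemma binT_final {ε : ℝ} (hε0 : 0 < ε) (hε1 : ε < 1) (d k : ℕ) (hd : 1 ≤ d) (hk : 1 ≤ k) :
    binT ((1-ε)/d) (d*k) (k-1)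
      ≤ (1-ε)^(k-1) * Real.exp (ε * k) := by
  have h1 : 0 < 1 - ε := by linarith
  have hd0 : (0:ℝ) < d := by exact_mod_cast hd
  set p := (1-ε)/d with hp
  have hp0 : 0 ≤ p := by positivity
  have hp1 : p ≤ 1 := by
    rw [hp, div_le_one hd0]
    have : (1:ℝ) ≤ d := by exact_mod_cast hd
    linarith
  have hy : (1:ℝ) ≤ (1-ε)⁻¹ := (one_le_inv₀ h1).mpr (by linarith)
  have hb := binT_le_exp hp0 hp1 hy (d*k) (k-1)
  have he1 : (1 / (1-ε)⁻¹ : ℝ) = 1 - ε := by field_simp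
  have he2 : 1 - p + p * (1-ε)⁻¹ = 1 + ε/d := by
    rw [hp]
    field_simp
    ring
  rw [he1, he2] at hb
  refine hb.trans ?_
  have := pow_one_add_le_exp (le_of_lt hε0) d k hd
  have hpow : (0:ℝ) ≤ (1-ε)^(k-1) := by positivity
  calc (1-ε)^(k-1) * (1 + ε/d)^(d*k)
      ≤ (1-ε)^(k-1) * Real.exp (ε * k) := by
        exact mul_le_mul_of_nonneg_left this hpow
end numeric

section bridge
variable {V : Type*} [Fintype V] [DecidableEq V]

lemma mem_edgeFins {G : SimpleGraph V} {e : Sym2 V} :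
    e ∈ edgeFins G ↔ e ∈ G.edgeSet := Set.Finite.mem_toFinset _

lemma degE_edgeFins (G : SimpleGraph V) (u : V) :
    degE (edgeFins G) u = degAt G u := by
  classical
  have hfin : ({w | G.Adj u w}).Finite := Set.toFinite _
  unfold degAt
  rw [Set.ncard_eq_toFinset_card _ hfin]
  unfold degE
  have himg : (edgeFins G).filter (fun e => u ∈ e)
      = hfin.toFinset.image (fun w => s(u,w)) := by
    ext e
    simp only [Finset.mem_filter, Finset.mem_image, Set.Finite.mem_toFinset,
      Set.mem_setOf_eq, mem_edgeFins]
    constructor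
    · rintro ⟨he, hu⟩
      obtain ⟨w, rfl⟩ := Sym2.mem_iff_exists.1 hu
      exact ⟨w, (G.mem_edgeSet).1 he, rfl⟩
    · rintro ⟨w, hw, rfl⟩
      exact ⟨(G.mem_edgeSet).2 hw, Sym2.mem_mk_left u w⟩
  rw [himg, Finset.card_image_of_injective _ (fun a b hab => ?_)]
  exact Sym2.congr_right.1 hab

lemma compCard_set_eq (F : Finset (Sym2 V)) (v : V) :
    ((↑({v} : Finset V) : Set V) ∪ reachSet F ({v} : Finset V))
      = {w | (SimpleGraph.fromEdgeSet (↑F : Set (Sym2 V))).Reachable v w} := by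
  ext y
  simp only [Set.mem_union, Finset.coe_singleton, Set.mem_singleton_iff, reachSet,
    Set.mem_setOf_eq, Finset.mem_singleton]
  constructor
  · rintro (rfl | ⟨u, rfl, h⟩)
    · exact SimpleGraph.Reachable.refl _
    · exact h
  · intro h
    exact Or.inr ⟨v, rfl, h⟩
end bridge

/-- In the subcritical regime `p = (1-ε)/d`, whp (uniformly over all
`d`-regular graphs on `n` vertices) every component of `G_p` has order at most
`9 log n / ε²`. -/
theorem stmt_0 (ε : ℝ) (hε0 : 0 < ε) (hε1 : ε < 1) (δ : ℝ) (hδ : 0 < δ) :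
    ∃ n₀ : ℕ, ∀ (V : Type) [Fintype V] (G : SimpleGraph V) (d : ℕ),
      1 ≤ d → IsRegOfDeg G d → n₀ ≤ Fintype.card V →
      1 - δ ≤ percProb G ((1 - ε) / (d : ℝ))
        (fun H => ∀ v : V,
          (compCard H v : ℝ) ≤ 9 * Real.log (Fintype.card V) / ε ^ 2) := by
  classical
  refine ⟨max 3 (Nat.ceil (1/((1-ε)*δ)) + 1), ?_⟩
  intro V _ G d hd hreg hn
  have h1ε : 0 < 1 - ε := by linarith
  set n := Fintype.card V with hn_def
  have hn3 : 3 ≤ n := le_trans (le_max_left _ _) hn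
  have hn0 : 0 < n := by omega
  have hnR : (1:ℝ) ≤ n := by exact_mod_cast hn0
  have hnR0 : (0:ℝ) < n := by linarith
  have hlog0 : 0 ≤ Real.log n := Real.log_nonneg hnR
  set K := 9 * Real.log n / ε ^ 2 with hK_def
  have hK0 : 0 ≤ K := by positivity
  set k := Nat.floor K + 1 with hk_def
  have hk1 : 1 ≤ k := Nat.le_add_left 1 _
  have hkK : K ≤ (k:ℝ) := by
    have := (Nat.lt_floor_add_one K).le
    push_cast
    exact_mod_cast this
  set p := (1 - ε) / (d:ℝ) with hp_def
  have hd0 : (0:ℝ) < d := by exact_mod_cast hd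
  have hp0 : 0 ≤ p := by positivity
  have hp1 : p ≤ 1 := by
    rw [hp_def, div_le_one hd0]
    have : (1:ℝ) ≤ d := by exact_mod_cast hd
    linarith
  -- identify percProb with prOf
  have hperc : percProb G p (fun H => ∀ v : V, (compCard H v : ℝ) ≤ K)
      = prOf (edgeFins G) p
          (fun F => ∀ v : V,
            (compCard (SimpleGraph.fromEdgeSet (↑F : Set (Sym2 V))) v : ℝ) ≤ K) := rfl
  rw [hperc]
  -- complement
  have hcompl := prOf_add_compl (edgeFins G) p
    (fun F => ∀ v : V, (compCard (SimpleGraph.fromEdgeSet (↑F : Set (Sym2 V))) v : ℝ) ≤ K)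
  -- per-vertex cluster bound
  have hone : ∀ v : V, prOf (edgeFins G) p
      (fun F => k ≤ compCard (SimpleGraph.fromEdgeSet (↑F : Set (Sym2 V))) v)
      ≤ (1-ε)^(k-1) * Real.exp (ε * k) := by
    intro v
    have hcongr : prOf (edgeFins G) p
        (fun F => k ≤ compCard (SimpleGraph.fromEdgeSet (↑F : Set (Sym2 V))) v)
        = prOf (edgeFins G) p
          (fun F => k ≤ ((↑({v} : Finset V) : Set V) ∪ reachSet F ({v} : Finset V)).ncard) := by
      refine prOf_congr _ fun F hF => ?_
      rw [compCard_set_eq]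
      exact Iff.rfl
    rw [hcongr]
    have hbud : (∑ w ∈ ({v} : Finset V), degE (edgeFins G) w)
        + (k - ({v} : Finset V).card) * d ≤ d * k := by
      rw [Finset.sum_singleton, degE_edgeFins, hreg v, Finset.card_singleton]
      have hk' : k - 1 + 1 = k := by omega
      have h2 : d * k = d * (k-1) + d := by
        calc d * k = d * ((k-1)+1) := by rw [hk']
          _ = d * (k-1) + d := Nat.mul_succ _ _
      rw [h2, mul_comm (k-1) d]
      omega
    have hcore := core hp0 hp1 d k (edgeFins G) {v} {v} (d*k) (subset_refl _)
      (fun e he => G.not_isDiag_of_mem_edgeSet (mem_edgeFins.1 he))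
      (fun y => by rw [degE_edgeFins]; exact le_of_eq (hreg y))
      (fun y hy hyW => (hyW hy).elim)
      hbud
    rw [Finset.card_singleton] at hcore
    exact hcore.trans (binT_final hε0 hε1 d k hd hk1)
  -- the bad event has small probability
  have hbad : prOf (edgeFins G) p
      (fun F => ¬ ∀ v : V, (compCard (SimpleGraph.fromEdgeSet (↑F : Set (Sym2 V))) v : ℝ) ≤ K)
      ≤ (n:ℝ) * ((1-ε)^(k-1) * Real.exp (ε * k)) := by
    have hmono : prOf (edgeFins G) p
        (fun F => ¬ ∀ v : V, (compCard (SimpleGraph.fromEdgeSet (↑F : Set (Sym2 V))) v : ℝ) ≤ K)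
        ≤ prOf (edgeFins G) p
          (fun F => ∃ v ∈ Finset.univ,
            k ≤ compCard (SimpleGraph.fromEdgeSet (↑F : Set (Sym2 V))) v) := by
      refine prOf_mono hp0 hp1 _ fun F hF hA => ?_
      push_neg at hA
      obtain ⟨v, hv⟩ := hA
      refine ⟨v, Finset.mem_univ v, ?_⟩
      have := (Nat.floor_lt hK0).2 hv
      omega
    refine hmono.trans ?_
    refine (prOf_union_bound hp0 hp1 (edgeFins G) Finset.univ _).trans ?_
    calc ∑ v ∈ Finset.univ, prOf (edgeFins G) p
          (fun F => k ≤ compCard (SimpleGraph.fromEdgeSet (↑F : Set (Sym2 V))) v)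
        ≤ ∑ _v ∈ (Finset.univ : Finset V), (1-ε)^(k-1) * Real.exp (ε * k) :=
          Finset.sum_le_sum fun v _ => hone v
      _ = (n:ℝ) * ((1-ε)^(k-1) * Real.exp (ε * k)) := by
          rw [Finset.sum_const, Finset.card_univ, nsmul_eq_mul]
  -- numerics
  have hnum : (n:ℝ) * ((1-ε)^(k-1) * Real.exp (ε * k)) ≤ δ := by
    set c := -Real.log (1-ε) with hc_def
    have hc : ε + ε^2/4 ≤ c := log_quad_bound hε0 hε1
    have hkm1 : ((k-1:ℕ):ℝ) = (k:ℝ) - 1 := by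
      have : 1 ≤ k := hk1
      push_cast [this]
      ring
    have hpow : (1-ε)^(k-1) = Real.exp (((k-1:ℕ):ℝ) * Real.log (1-ε)) := by
      rw [← Real.log_pow, Real.exp_log (by positivity)]
    have hS : ((k-1:ℕ):ℝ) * Real.log (1-ε) + ε * k ≤ c - 2 * Real.log n := by
      rw [hkm1]
      have hlog1 : Real.log (1-ε) = -c := by rw [hc_def]; ring
      rw [hlog1]
      have hquarter : (9:ℝ)/4 * Real.log n ≤ (ε^2/4) * (k:ℝ) := by
        have h1 : (ε^2/4) * K = 9/4 * Real.log n := by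
          rw [hK_def]
          field_simp
        have h2 : (ε^2/4) * K ≤ (ε^2/4) * (k:ℝ) := by
          have : (0:ℝ) ≤ ε^2/4 := by positivity
          exact mul_le_mul_of_nonneg_left hkK this
        linarith
      have hkR1 : (1:ℝ) ≤ (k:ℝ) := by exact_mod_cast hk1
      nlinarith [hc, hlog0]
    have hexp : Real.exp (((k-1:ℕ):ℝ) * Real.log (1-ε) + ε * k)
        ≤ Real.exp (c - 2 * Real.log n) := Real.exp_le_exp.2 hS
    have hval : Real.exp (c - 2 * Real.log n) = (1-ε)⁻¹ / n / n := by
      rw [show c - 2 * Real.log n = c - Real.log n - Real.log n by ring,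
        Real.exp_sub, Real.exp_sub, Real.exp_log hnR0, hc_def, Real.exp_neg,
        Real.exp_log h1ε]
    have hfinal : (n:ℝ) * ((1-ε)⁻¹ / n / n) = (1-ε)⁻¹ / n := by
      field_simp
    have hceil : 1/((1-ε)*δ) ≤ (n:ℝ) := by
      have h1 : (1/((1-ε)*δ) : ℝ) ≤ (Nat.ceil (1/((1-ε)*δ)) : ℝ) := Nat.le_ceil _
      have h2 : (Nat.ceil (1/((1-ε)*δ)) + 1 : ℕ) ≤ n := le_trans (le_max_right 3 _) hn
      have h3 : ((Nat.ceil (1/((1-ε)*δ)) : ℕ) : ℝ) ≤ (n:ℝ) := by exact_mod_cast le_trans (Nat.le_succ _) h2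
      linarith
    have hlast : (1-ε)⁻¹ / n ≤ δ := by
      have h4 : 1 ≤ (n:ℝ) * ((1-ε)*δ) := (div_le_iff₀ (by positivity)).1 hceil
      rw [div_le_iff₀ hnR0]
      nlinarith [h4, mul_inv_cancel₀ (ne_of_gt h1ε), mul_pos hnR0 hδ]
    calc (n:ℝ) * ((1-ε)^(k-1) * Real.exp (ε * k))
        = (n:ℝ) * Real.exp (((k-1:ℕ):ℝ) * Real.log (1-ε) + ε * k) := by
          rw [hpow, ← Real.exp_add]
      _ ≤ (n:ℝ) * Real.exp (c - 2 * Real.log n) := by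
          exact mul_le_mul_of_nonneg_left hexp (le_of_lt hnR0)
      _ = (1-ε)⁻¹ / n := by rw [hval, hfinal]
      _ ≤ δ := hlast
  linarith [prOf_le_one hp0 hp1 (edgeFins G)
    (fun F => ¬ ∀ v : V, (compCard (SimpleGraph.fromEdgeSet (↑F : Set (Sym2 V))) v : ℝ) ≤ K),
    prOf_nonneg hp0 hp1 (edgeFins G)
    (fun F => ¬ ∀ v : V, (compCard (SimpleGraph.fromEdgeSet (↑F : Set (Sym2 V))) v : ℝ) ≤ K)]
end

section
/- There exist ε₀ > 0 and K > 0 such that for every ε ∈ (0, ε₀), |y(ε) − 2ε| ≤ K·ε². -/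
open Finset

variable {V : Type*}

set_option maxHeartbeats 800000 in
/-- `y(ε) = 2ε + O(ε²)` for small `ε`. -/
theorem stmt_12 :
    ∃ ε₀ > (0 : ℝ), ∃ K > (0 : ℝ), ∀ ε : ℝ, 0 < ε → ε < ε₀ →
      ∀ y : ℝ, 0 < y → y < 1 → y = 1 - Real.exp (-(1 + ε) * y) →
      |y - 2 * ε| ≤ K * ε ^ 2 := by
  refine ⟨1/10, by norm_num, 16, by norm_num, fun ε hε hε₀ y hy0 hy1 heq => ?_⟩
  set a : ℝ := (1 + ε) * y with ha
  have ha0 : 0 < a := by positivity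
  have hna : -(1+ε) * y = -a := by ring
  have hexp : Real.exp (-a) = 1 - y := by rw [← hna]; linarith [heq]
  have ha2 : a ≤ 2 := by nlinarith
  have hcr : (1 - a/2)^2 ≤ Real.exp (-a) := by
    have h1 : 1 - a/2 ≤ Real.exp (-(a/2)) := by
      linarith [Real.add_one_le_exp (-(a/2))]
    have h2 : Real.exp (-a) = Real.exp (-(a/2)) ^ 2 := by
      rw [← Real.exp_nat_mul]; ring_nf
    rw [h2]
    nlinarith [Real.exp_pos (-(a/2))]
  have h5 : y ≤ a - a^2/4 := by nlinarith [hcr, hexp]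
  rw [ha] at h5
  have hy4 : y ≤ 4 * ε := by
    nlinarith [h5, mul_pos hε hy0, sq_nonneg ε, mul_pos hy0 hy0, sq_nonneg (ε*y)]
  have ha1 : |(-a)| ≤ 1 := by
    rw [abs_neg, abs_of_pos ha0, ha]; nlinarith
  have hb := Real.exp_bound ha1 (n := 3) (by norm_num)
  have hsum : ∑ m ∈ Finset.range 3, (-a) ^ m / (Nat.factorial m : ℝ) = 1 - a + a^2/2 := by
    simp [Finset.sum_range_succ, Nat.factorial]
    ring
  have habs : |(-a)| = a := by rw [abs_neg, abs_of_pos ha0]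
  rw [hsum, habs, hexp] at hb
  norm_num [Nat.factorial] at hb
  rw [abs_le] at hb
  obtain ⟨hb1, hb2⟩ := hb
  rw [ha] at hb1 hb2
  have hb1' : (0:ℝ) ≤ ε*y - (1+ε)^2*y^2/2 + (2/9)*(1+ε)^3*y^3 := by nlinarith [hb1]
  have hb2' : ε*y - (1+ε)^2*y^2/2 - (2/9)*(1+ε)^3*y^3 ≤ 0 := by nlinarith [hb2]
  have hdiv1 : (1+ε)^2*y/2 - (2/9)*(1+ε)^3*y^2 ≤ ε := by
    by_contra h
    push_neg at h
    have h' := mul_lt_mul_of_pos_right h hy0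
    linarith [hb1', h']
  have hdiv2 : ε ≤ (1+ε)^2*y/2 + (2/9)*(1+ε)^3*y^2 := by
    by_contra h
    push_neg at h
    have h' := mul_lt_mul_of_pos_right h hy0
    linarith [hb2', h']
  have hysq : y^2 ≤ 16*ε^2 := by nlinarith [hy4, hy0]
  have h3 : (1+ε)^3 ≤ 1331/1000 := by nlinarith
  have hB : (2/9)*(1+ε)^3*y^2 ≤ 5*ε^2 := by
    nlinarith [mul_le_mul h3 hysq (sq_nonneg y) (by positivity : (0:ℝ) ≤ 1331/1000), sq_nonneg ε]
  have hBpos : 0 ≤ (2/9)*(1+ε)^3*y^2 := by positivity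
  have hcy : y ≤ (1+ε)^2*y := by nlinarith [hy0.le, sq_nonneg ε]
  rw [abs_le]
  constructor
  · -- lower: y ≥ 2ε - 16ε²
    by_contra h
    push_neg at h
    have h' := mul_lt_mul_of_pos_left h (show (0:ℝ) < (1+ε)^2 by positivity)
    linarith [hdiv2, hB, h', mul_pos (mul_pos hε hε) hε, sq_nonneg (ε*ε),
      mul_pos hε hε]
  · -- upper: y ≤ 2ε + 16ε²
    linarith [hdiv1, hB, hcy]
end

section
/- Let C > 1 and let G^(1),…,G^(t) be connected graphs with 2 ≤ |V(G^(i))| ≤ C for all i ∈ [t], and let G = □_{i=1}^t G^(i). Then the isoperimetric constant of G satisfies i(G) ≥ 1/(2C); that is, for every nonempty S ⊆ V(G) with |S| ≤ |V(G)|/2, the number of edges of G with exactly one endpoint in S is at least |S|/(2C). -/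
open Finset

variable {V : Type*}

/-- Discrete intermediate value: if `f 0` holds and `f n` fails, there is a switch point. -/
lemma ivt_aux (f : ℕ → Prop) : ∀ n, f 0 → ¬ f n → ∃ k, k < n ∧ f k ∧ ¬ f (k + 1) := by
  intro n
  induction n with
  | zero => intro h0 hn; exact absurd h0 hn
  | succ n ih =>
    intro h0 hn
    by_cases hfn : f n
    · exact ⟨n, Nat.lt_succ_self n, hfn, hn⟩
    · obtain ⟨k, hk, h⟩ := ih h0 hfn
      exact ⟨k, hk.trans (Nat.lt_succ_self n), h⟩

/-- Canonical-path crossing lemma: between `u ∈ S` and `v ∉ S` there is a boundary edge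
with controlled coordinates. -/
lemma crossing_aux {t : ℕ} {V : Fin t → Type} (Gs : ∀ i, SimpleGraph (V i))
    (hconn : ∀ i, (Gs i).Connected) (S : Set (∀ i, V i)) (u v : ∀ i, V i)
    (hu : u ∈ S) (hv : v ∉ S) :
    ∃ (i : Fin t) (x x' : ∀ i, V i), x ∈ S ∧ x' ∉ S ∧ (Gs i).Adj (x i) (x' i) ∧
      (∀ j, j ≠ i → x j = x' j) ∧ (∀ j, j < i → x j = v j) ∧ (∀ j, i < j → x j = u j) := by
  classical
  set hm : ℕ → (∀ i, V i) := fun m j => if (j : ℕ) < m then v j else u j with hhm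
  have h0 : hm 0 = u := by funext j; simp [hm]
  have ht : hm t = v := by funext j; simp [hm, j.isLt]
  obtain ⟨m, hmt, hmem, hnot⟩ := ivt_aux (fun m => hm m ∈ S) t (by show hm 0 ∈ S; rw [h0]; exact hu) (by show ¬ hm t ∈ S; rw [ht]; exact hv)
  set i : Fin t := ⟨m, hmt⟩ with hidef
  have hmi : hm m i = u i := by simp [hm, hidef]
  obtain ⟨w⟩ := (hconn i).preconnected (u i) (v i)
  set g : ℕ → (∀ i, V i) := fun k => Function.update (hm m) i (w.getVert k) with hgdef
  have hg0 : g 0 = hm m := by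
    have : g 0 = Function.update (hm m) i (hm m i) := by
      simp [g, w.getVert_zero, hmi]
    rw [this, Function.update_eq_self]
  have hgl : g w.length = hm (m + 1) := by
    funext j
    by_cases hj : j = i
    · rw [hj]
      have hlt : ((i : Fin t) : ℕ) < m + 1 := by simp [hidef]
      simp [g, w.getVert_length, hm, hlt]
    · have hjm : (j : ℕ) ≠ m := fun h => hj (Fin.ext h)
      rw [show g w.length j = hm m j from Function.update_of_ne hj _ _]
      rcases lt_trichotomy (j : ℕ) m with h | h | h
      · have h2 : (j : ℕ) < m + 1 := by omega
        simp [hm, h, h2]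
      · exact absurd h hjm
      · have h1 : ¬ (j : ℕ) < m := by omega
        have h2 : ¬ (j : ℕ) < m + 1 := by omega
        simp [hm, h1, h2]
  obtain ⟨k, hkl, hk, hk1⟩ := ivt_aux (fun k => g k ∈ S) w.length (by show g 0 ∈ S; rw [hg0]; exact hmem) (by show ¬ g w.length ∈ S; rw [hgl]; exact hnot)
  refine ⟨i, g k, g (k + 1), hk, hk1, ?_, ?_, ?_, ?_⟩
  · simpa [g, Function.update_self] using w.adj_getVert_succ hkl
  · intro j hj
    simp [g, Function.update_of_ne hj]
  · intro j hj
    have hlt : (j : ℕ) < m := hj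
    simp [g, Function.update_of_ne (ne_of_lt hj), hm, hlt]
  · intro j hj
    have h1 : ¬ (j : ℕ) < m := by
      have : m < (j : ℕ) := hj
      omega
    simp [g, Function.update_of_ne (ne_of_gt hj), hm, h1]

/-- isoperimetric constant of a product of connected graphs of order
between 2 and `C`: every set `S` of at most half the vertices has edge boundary of size
at least `|S|/(2C)`. -/
theorem stmt_13 (C : ℝ) (hC : 1 < C) (t : ℕ)
    (V : Fin t → Type) [∀ i, Fintype (V i)]
    (Gs : ∀ i, SimpleGraph (V i))
    (hconn : ∀ i, (Gs i).Connected)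
    (hlb : ∀ i, 2 ≤ Fintype.card (V i))
    (hub : ∀ i, (Fintype.card (V i) : ℝ) ≤ C)
    (S : Set (∀ i, V i)) (hS : S.Nonempty)
    (hhalf : 2 * S.ncard ≤ Fintype.card (∀ i, V i)) :
    (S.ncard : ℝ) / (2 * C) ≤
      (({e : Sym2 (∀ i, V i) | e ∈ (prodGraph Gs).edgeSet ∧
          ∃ u v, e = s(u, v) ∧ u ∈ S ∧ v ∉ S}).ncard : ℝ) := by
  classical
  set N := Fintype.card (∀ i, V i) with hN
  have hSfin : S.Finite := Set.toFinite S
  set Sf : Finset (∀ i, V i) := hSfin.toFinset with hSfdef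
  have hSfcard : Sf.card = S.ncard := (Set.ncard_eq_toFinset_card S hSfin).symm
  have hSpos : 0 < S.ncard := (Set.ncard_pos hSfin).2 hS
  have hSleN : S.ncard ≤ N := by omega
  have htpos : 0 < t := by
    by_contra h
    have ht0 : t = 0 := by omega
    haveI : IsEmpty (Fin t) := by rw [ht0]; infer_instance
    have hN1 : N = 1 := by
      rw [hN, Fintype.card_pi, Finset.univ_eq_empty, Finset.prod_empty]
    omega
  obtain ⟨z, hz⟩ := hS
  set Bset : Set (Sym2 (∀ i, V i)) := {e : Sym2 (∀ i, V i) | e ∈ (prodGraph Gs).edgeSet ∧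
      ∃ u v, e = s(u, v) ∧ u ∈ S ∧ v ∉ S} with hBsetdef
  have hBfin : Bset.Finite := Set.toFinite _
  set Bf : Finset (Sym2 (∀ i, V i)) := hBfin.toFinset with hBfdef
  have key : ∀ p : (∀ i, V i) × (∀ i, V i), ∃ (i : Fin t) (x x' : ∀ i, V i),
      p.1 ∈ S → p.2 ∉ S → (x ∈ S ∧ x' ∉ S ∧ (Gs i).Adj (x i) (x' i) ∧
        (∀ j, j ≠ i → x j = x' j) ∧ (∀ j, j < i → x j = p.2 j) ∧
        (∀ j, i < j → x j = p.1 j)) := by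
    intro p
    by_cases hp : p.1 ∈ S ∧ p.2 ∉ S
    · obtain ⟨i, x, x', h⟩ := crossing_aux Gs hconn S p.1 p.2 hp.1 hp.2
      exact ⟨i, x, x', fun _ _ => h⟩
    · exact ⟨⟨0, htpos⟩, z, z, fun h1 h2 => absurd ⟨h1, h2⟩ hp⟩
  choose I X X' hkey using key
  set Pr : Finset ((∀ i, V i) × (∀ i, V i)) := Sf ×ˢ Sfᶜ with hPrdef
  set fE : (∀ i, V i) × (∀ i, V i) → Sym2 (∀ i, V i) := fun p => s(X p, X' p) with hfEdef
  have hmemPr : ∀ p ∈ Pr, p.1 ∈ S ∧ p.2 ∉ S := by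
    intro p hp
    rw [hPrdef, Finset.mem_product] at hp
    refine ⟨hSfin.mem_toFinset.mp hp.1, fun h => ?_⟩
    exact (Finset.mem_compl.mp hp.2) (hSfin.mem_toFinset.mpr h)
  have hmap : ∀ p ∈ Pr, fE p ∈ Bf := by
    intro p hp
    obtain ⟨h1, h2⟩ := hmemPr p hp
    obtain ⟨hx, hx', hadj, hoff, -, -⟩ := hkey p h1 h2
    rw [hBfdef, hBfin.mem_toFinset]
    exact ⟨(prodGraph Gs).mem_edgeSet.mpr ⟨I p, hadj, hoff⟩, X p, X' p, rfl, hx, hx'⟩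
  have hcount : Pr.card = ∑ e ∈ Bf, (Pr.filter fun p => fE p = e).card :=
    Finset.card_eq_sum_card_fiberwise hmap
  have hfiber : ∀ e ∈ Bf, ((Pr.filter fun p => fE p = e).card : ℝ) ≤ (N : ℝ) * C := by
    intro e he
    rcases (Pr.filter fun p => fE p = e).eq_empty_or_nonempty with hemp | ⟨p0, hp0⟩
    · rw [hemp]
      simp only [Finset.card_empty, Nat.cast_zero]
      have : (0:ℝ) < C := lt_trans zero_lt_one hC
      positivity
    · set i : Fin t := I p0 with hidef
      set F := Pr.filter fun p => fE p = e with hFdef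
      have hFmem : ∀ p ∈ F, p.1 ∈ S ∧ p.2 ∉ S ∧ fE p = e := by
        intro p hp
        rw [hFdef, Finset.mem_filter] at hp
        exact ⟨(hmemPr p hp.1).1, (hmemPr p hp.1).2, hp.2⟩
      have hXX : ∀ p ∈ F, X p = X p0 ∧ X' p = X' p0 := by
        intro p hp
        obtain ⟨h1, h2, h3⟩ := hFmem p hp
        obtain ⟨h1', h2', h3'⟩ := hFmem p0 hp0
        have heq : s(X p, X' p) = s(X p0, X' p0) := h3.trans h3'.symm
        rcases Sym2.eq_iff.mp heq with ⟨ha, hb⟩ | ⟨ha, hb⟩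
        · exact ⟨ha, hb⟩
        · obtain ⟨hx, hx', -⟩ := hkey p h1 h2
          obtain ⟨-, hx0', -⟩ := hkey p0 h1' h2'
          exact absurd (ha ▸ hx) hx0'
      have hI : ∀ p ∈ F, I p = i := by
        intro p hp
        by_contra hne
        obtain ⟨h1, h2, -⟩ := hFmem p hp
        obtain ⟨h1', h2', -⟩ := hFmem p0 hp0
        obtain ⟨hx, hx'⟩ := hXX p hp
        obtain ⟨-, -, -, hoff, -, -⟩ := hkey p h1 h2
        obtain ⟨-, -, hadj0, -, -, -⟩ := hkey p0 h1' h2'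
        have heq : X p i = X' p i := hoff i (fun h => hne h.symm)
        rw [hx, hx'] at heq
        exact hadj0.ne heq
      -- injection into (∀ j, V j) × V i
      set g : (∀ i, V i) × (∀ i, V i) → (∀ j, V j) × V i :=
        fun p => ((fun j => if j < i then p.1 j else p.2 j), p.1 i) with hgdef
      have hinj : Set.InjOn g ↑F := by
        intro p hp q hq hgpq
        rw [Finset.mem_coe] at hp hq
        obtain ⟨hp1, hp2, -⟩ := hFmem p hp
        obtain ⟨hq1, hq2, -⟩ := hFmem q hq
        obtain ⟨-, -, -, -, hplt, hpgt⟩ := hkey p hp1 hp2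
        obtain ⟨-, -, -, -, hqlt, hqgt⟩ := hkey q hq1 hq2
        have hIp := hI p hp
        have hIq := hI q hq
        obtain ⟨hXp, hXp'⟩ := hXX p hp
        obtain ⟨hXq, hXq'⟩ := hXX q hq
        have hmix : (fun j => if j < i then p.1 j else p.2 j) =
            (fun j => if j < i then q.1 j else q.2 j) := congrArg Prod.fst hgpq
        have hi2 : p.1 i = q.1 i := congrArg Prod.snd hgpq
        have hfst : p.1 = q.1 := by
          funext j
          rcases lt_trichotomy j i with h | h | h
          · have := congrFun hmix j
            simpa [if_pos h] using this
          · rw [h]; exact hi2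
          · have e1 : X p j = p.1 j := hpgt j (hIp ▸ h)
            have e2 : X q j = q.1 j := hqgt j (hIq ▸ h)
            rw [← e1, ← e2, hXp, hXq]
        have hsnd : p.2 = q.2 := by
          funext j
          rcases lt_trichotomy j i with h | h | h
          · have e1 : X p j = p.2 j := hplt j (hIp ▸ h)
            have e2 : X q j = q.2 j := hqlt j (hIq ▸ h)
            rw [← e1, ← e2, hXp, hXq]
          · have := congrFun hmix j
            simpa [h, lt_irrefl] using this
          · have := congrFun hmix j
            simpa [if_neg (not_lt_of_gt h)] using this
        exact Prod.ext hfst hsnd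
      have hcard : F.card ≤ N * Fintype.card (V i) := by
        have := Finset.card_le_card_of_injOn g (fun a _ => Finset.mem_univ (g a)) hinj
        rwa [Finset.card_univ, Fintype.card_prod, ← hN] at this
      calc ((F.card : ℝ)) ≤ ((N * Fintype.card (V i) : ℕ) : ℝ) := by exact_mod_cast hcard
        _ = (N : ℝ) * (Fintype.card (V i) : ℝ) := by push_cast; ring
        _ ≤ (N : ℝ) * C := by
            apply mul_le_mul_of_nonneg_left (hub i) (by positivity)
  have hPrcard : Pr.card = S.ncard * (N - S.ncard) := by
    rw [hPrdef, Finset.card_product, Finset.card_compl, hSfcard, hN]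
  have hle : (S.ncard : ℝ) * ((N : ℝ) - (S.ncard : ℝ)) ≤ (Bf.card : ℝ) * ((N : ℝ) * C) := by
    have h1 : (Pr.card : ℝ) = ∑ e ∈ Bf, ((Pr.filter fun p => fE p = e).card : ℝ) := by
      exact_mod_cast hcount
    have h2 : ∑ e ∈ Bf, ((Pr.filter fun p => fE p = e).card : ℝ) ≤
        ∑ _e ∈ Bf, (N : ℝ) * C := Finset.sum_le_sum hfiber
    rw [Finset.sum_const, nsmul_eq_mul] at h2
    have hcast : (Pr.card : ℝ) = (S.ncard : ℝ) * ((N : ℝ) - (S.ncard : ℝ)) := by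
      rw [hPrcard, Nat.cast_mul, Nat.cast_sub hSleN]
    linarith
  have hgoal : (Bset.ncard : ℝ) = (Bf.card : ℝ) := by
    rw [Set.ncard_eq_toFinset_card Bset hBfin, hBfdef]
  rw [hgoal]
  have hNpos : (0 : ℝ) < (N : ℝ) := by
    have : 0 < N := by omega
    exact_mod_cast this
  have hCpos : (0 : ℝ) < C := lt_trans zero_lt_one hC
  have haN : 2 * (S.ncard : ℝ) ≤ (N : ℝ) := by exact_mod_cast hhalf
  have hapos : (0 : ℝ) < (S.ncard : ℝ) := by exact_mod_cast hSpos
  have hbnn : (0 : ℝ) ≤ (Bf.card : ℝ) := Nat.cast_nonneg _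
  rw [div_le_iff₀ (by positivity)]
  nlinarith [hle, mul_le_mul_of_nonneg_right haN (le_of_lt hapos), hNpos, hCpos, hbnn,
    mul_nonneg hbnn (le_of_lt hCpos)]
end
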